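/- Let S be a bilattice of pairs of projections on Hilbert spaces H₁, H₂, and define M(S) = {T ∈ B(H₁,H₂) : Q T P = 0 for all (P,Q) ∈ S}. Then M(S) is a weak-operator-topology closed linear subspace of B(H₁,H₂), and it is reflexive: every T ∈ B(H₁,H₂) with Tξ ∈ closure(span{Uξ : U ∈ M(S)}) for all ξ ∈ H₁ belongs to M(S). -/

import Mathlib

noncomputable section

section Defs

variable {H H₁ H₂ : Type*}
variable [NormedAddCommGroup H] [InnerProductSpace ℂ H] [CompleteSpace H]
variable [NormedAddCommGroup H₁] [InnerProductSpace ℂ H₁] [CompleteSpace H₁]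
variable [NormedAddCommGroup H₂] [InnerProductSpace ℂ H₂] [CompleteSpace H₂]

/-- `P` is an orthogonal projection operator. -/
def IsProjOp (P : H →L[ℂ] H) : Prop :=
  IsSelfAdjoint P ∧ P.comp P = P

/-- The orthogonal projection onto the closure of `K`, as an operator `H →L[ℂ] H`. -/
def projOf (K : Submodule ℂ H) : H →L[ℂ] H :=
  K.topologicalClosure.subtypeL.comp K.topologicalClosure.orthogonalProjectionOnto

/-- The supremum of a family of projections: projection onto closed span of ranges. -/
def pSup {ι : Type*} (f : ι → H →L[ℂ] H) : H →L[ℂ] H :=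
  projOf (⨆ i, LinearMap.range (f i : H →ₗ[ℂ] H))

/-- The infimum of a family of projections: projection onto intersection of ranges. -/
def pInf {ι : Type*} (f : ι → H →L[ℂ] H) : H →L[ℂ] H :=
  projOf (⨅ i, LinearMap.range (f i : H →ₗ[ℂ] H))

/-- Binary infimum of projections. -/
def pAnd (P Q : H →L[ℂ] H) : H →L[ℂ] H := projOf (LinearMap.range (P : H →ₗ[ℂ] H) ⊓ LinearMap.range (Q : H →ₗ[ℂ] H))

/-- Binary supremum of projections. -/
def pOr (P Q : H →L[ℂ] H) : H →L[ℂ] H := projOf (LinearMap.range (P : H →ₗ[ℂ] H) ⊔ LinearMap.range (Q : H →ₗ[ℂ] H))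

/-- Order on projections: inclusion of ranges. -/
def pLe (P Q : H →L[ℂ] H) : Prop :=
  LinearMap.range (P : H →ₗ[ℂ] H) ≤ LinearMap.range (Q : H →ₗ[ℂ] H)

/-- `span (U ξ)`. -/
def opSpan (U : Set (H₁ →L[ℂ] H₂)) (ξ : H₁) : Submodule ℂ H₂ :=
  Submodule.span ℂ {y | ∃ T ∈ U, T ξ = y}

/-- The reflexive hull of a set of operators. -/
def RefSet (U : Set (H₁ →L[ℂ] H₂)) : Set (H₁ →L[ℂ] H₂) :=
  {T | ∀ ξ : H₁, T ξ ∈ (opSpan U ξ).topologicalClosure}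

/-- `Map U`: sends a projection `P` to the projection onto the closed span of `{T (P ξ)}`. -/
def mapU (U : Set (H₁ →L[ℂ] H₂)) (P : H₁ →L[ℂ] H₁) : H₂ →L[ℂ] H₂ :=
  projOf (Submodule.span ℂ {y | ∃ T ∈ U, ∃ ξ, T (P ξ) = y})

/-- The masa-bimodule `M(S)` associated to a bilattice. -/
def MS (S : Set ((H₁ →L[ℂ] H₁) × (H₂ →L[ℂ] H₂))) : Set (H₁ →L[ℂ] H₂) :=
  {T | ∀ pq ∈ S, pq.2.comp (T.comp pq.1) = 0}

/-- The bilattice `Bil(U)` of a set of operators. -/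
def BilU (U : Set (H₁ →L[ℂ] H₂)) : Set ((H₁ →L[ℂ] H₁) × (H₂ →L[ℂ] H₂)) :=
  {pq | IsProjOp pq.1 ∧ IsProjOp pq.2 ∧ ∀ T ∈ U, pq.2.comp (T.comp pq.1) = 0}

/-- `Alg(L)`: operators leaving the range of every projection of `L` invariant. -/
def AlgL (L : Set (H →L[ℂ] H)) : Set (H →L[ℂ] H) :=
  {T | ∀ P ∈ L, ∀ x ∈ LinearMap.range (P : H →ₗ[ℂ] H), T x ∈ LinearMap.range (P : H →ₗ[ℂ] H)}

/-- `Lat(A)`: projections `P` with `(1-P) A P = 0`. -/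
def LatA (A : Set (H →L[ℂ] H)) : Set (H →L[ℂ] H) :=
  {P | IsProjOp P ∧ ∀ T ∈ A, (1 - P).comp (T.comp P) = 0}

/-- `Op(θ)` for a map `θ` defined on a set of projections `L`. -/
def OpTh (L : Set (H₁ →L[ℂ] H₁)) (θ : (H₁ →L[ℂ] H₁) → (H₂ →L[ℂ] H₂)) : Set (H₁ →L[ℂ] H₂) :=
  {T | ∀ P ∈ L, (1 - θ P).comp (T.comp P) = 0}


theorem stmt1 (S : Set ((H₁ →L[ℂ] H₁) × (H₂ →L[ℂ] H₂)))
    (hproj : ∀ pq ∈ S, IsProjOp pq.1 ∧ IsProjOp pq.2)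
    (h00 : ((0 : H₁ →L[ℂ] H₁), (0 : H₂ →L[ℂ] H₂)) ∈ S)
    (h10 : ((1 : H₁ →L[ℂ] H₁), (0 : H₂ →L[ℂ] H₂)) ∈ S)
    (h01 : ((0 : H₁ →L[ℂ] H₁), (1 : H₂ →L[ℂ] H₂)) ∈ S)
    (hbil : ∀ p ∈ S, ∀ q ∈ S,
      (pAnd p.1 q.1, pOr p.2 q.2) ∈ S ∧ (pOr p.1 q.1, pAnd p.2 q.2) ∈ S) :
    (0 : H₁ →L[ℂ] H₂) ∈ MS S ∧
    (∀ T ∈ MS S, ∀ T' ∈ MS S, T + T' ∈ MS S) ∧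
    (∀ (c : ℂ), ∀ T ∈ MS S, c • T ∈ MS S) ∧
    IsClosed ((ContinuousLinearMapWOT.ofCLM : (H₁ →L[ℂ] H₂) → H₁ →WOT[ℂ] H₂) '' MS S) ∧
    (∀ T ∈ RefSet (MS S), T ∈ MS S) := by
  refine ⟨?_, ?_, ?_, ?_, ?_⟩
  · intro pq hpq
    simp [ContinuousLinearMap.comp_zero, ContinuousLinearMap.zero_comp]
  · intro T hT T' hT' pq hpq
    simp [ContinuousLinearMap.comp_add, ContinuousLinearMap.add_comp, hT pq hpq, hT' pq hpq]
  · intro c T hT pq hpq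
    simp [ContinuousLinearMap.comp_smulₛₗ, ContinuousLinearMap.smul_comp, hT pq hpq]
  · have himg : (ContinuousLinearMapWOT.ofCLM : (H₁ →L[ℂ] H₂) → H₁ →WOT[ℂ] H₂) '' MS S =
        ⋂ pq ∈ S, ⋂ ξ : H₁, ⋂ y : H₂ →L[ℂ] ℂ,
          {A : H₁ →WOT[ℂ] H₂ | (y.comp pq.2) (A (pq.1 ξ)) = 0} := by
      ext A
      simp only [Set.mem_iInter, Set.mem_setOf_eq]
      constructor
      · rintro ⟨T, hT, rfl⟩ pq hpq ξ y
        have h2 : pq.2 (T (pq.1 ξ)) = 0 := by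
          have := congrArg (fun (f : H₁ →L[ℂ] H₂) => f ξ) (hT pq hpq)
          simpa using this
        show y (pq.2 ((ContinuousLinearMapWOT.ofCLM T) (pq.1 ξ))) = 0
        rw [ContinuousLinearMapWOT.ofCLM_apply, h2, map_zero]
      · intro h
        refine ⟨A.toCLM, ?_,
          ContinuousLinearMapWOT.ofCLM_toCLM A⟩
        intro pq hpq
        ext ξ
        set z : H₂ := pq.2 (A.toCLM (pq.1 ξ)) with hz
        have hA : A (pq.1 ξ) = A.toCLM (pq.1 ξ) := rfl
        have hy := h pq hpq ξ (innerSL ℂ z)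
        rw [ContinuousLinearMap.comp_apply, hA] at hy
        simp only [innerSL_apply_apply, ← hz] at hy
        have hz0 : z = 0 := inner_self_eq_zero.mp hy
        exact hz0
    rw [himg]
    refine isClosed_iInter fun pq => isClosed_iInter fun _ => isClosed_iInter fun ξ =>
      isClosed_iInter fun y => ?_
    exact isClosed_eq (ContinuousLinearMapWOT.continuous_dual_apply (pq.1 ξ) (y.comp pq.2))
      continuous_const
  · intro T hT pq hpq
    ext ξ
    simp only [ContinuousLinearMap.comp_apply, ContinuousLinearMap.zero_apply]
    have hξ := hT (pq.1 ξ)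
    have hker : (opSpan (MS S) (pq.1 ξ)).topologicalClosure ≤
        LinearMap.ker (pq.2 : H₂ →ₗ[ℂ] H₂) := by
      have h1 : opSpan (MS S) (pq.1 ξ) ≤ LinearMap.ker (pq.2 : H₂ →ₗ[ℂ] H₂) := by
        rw [opSpan, Submodule.span_le]
        rintro y ⟨U, hU, rfl⟩
        have := congrArg (fun (f : H₁ →L[ℂ] H₂) => f ξ) (hU pq hpq)
        simpa using this
      exact Submodule.topologicalClosure_minimal _ h1 (ContinuousLinearMap.isClosed_ker pq.2)
    exact hker hξ

end Defs
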